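/- Let n, k be natural numbers, W a subset of Fin n, v, p : Fin n → Bool, part : Fin n → Fin k an assignment of bit positions to parts, ι a type, and σ : Fin n → Bool → ι a function such that (1) σ i b = σ j b' implies i = j, and (2) for each i, σ i false = σ i true holds if and only if i ∈ W. Then in MvPolynomial ι ℤ, the whole-rule equality ∏_{i : Fin n} X_{σ i (p i)} = ∏_{i : Fin n} X_{σ i (v i)} holds if and only if for every part j : Fin k the partial equality ∏_{i : part i = j} X_{σ i (p i)} = ∏_{i : part i = j} X_{σ i (v i)} holds. -/

import Mathlib

open MvPolynomial

lemma prod_X_eq_monomial' {α ι : Type*} (s : Finset α) (f : α → ι) :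
    (∏ i ∈ s, (X (f i) : MvPolynomial ι ℤ)) =
      monomial (∑ i ∈ s, Finsupp.single (f i) 1) 1 := by
  classical
  induction s using Finset.induction with
  | empty => simp [monomial_zero', C_1]
  | insert _ _ h ih =>
    rw [Finset.prod_insert h, Finset.sum_insert h, ih, X, monomial_mul, one_mul]

lemma prod_X_eq_iff {α ι : Type*} (s : Finset α) (f g : α → ι)
    (hfg : ∀ i ∈ s, ∀ j ∈ s, f i = g j → i = j) :
    (∏ i ∈ s, (X (f i) : MvPolynomial ι ℤ)) = ∏ i ∈ s, X (g i) ↔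
      ∀ i ∈ s, f i = g i := by
  classical
  constructor
  · intro h i hi
    rw [prod_X_eq_monomial', prod_X_eq_monomial',
      monomial_eq_monomial_iff] at h
    rcases h with h | h
    · have := congrArg (fun F => F (f i)) h.1
      simp only [Finsupp.finset_sum_apply] at this
      have hne : (∑ j ∈ s, (Finsupp.single (f j) 1 : ι →₀ ℕ) (f i)) ≠ 0 := by
        intro h0
        rw [Finset.sum_eq_zero_iff] at h0
        have := h0 i hi
        simp [Finsupp.single_apply] at this
      rw [this] at hne
      have : ∃ j ∈ s, (Finsupp.single (g j) 1 : ι →₀ ℕ) (f i) ≠ 0 := by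
        by_contra hc
        push_neg at hc
        exact hne (Finset.sum_eq_zero hc)
      obtain ⟨j, hj, hj'⟩ := this
      have hgj : g j = f i := by
        by_contra hne'
        simp [Finsupp.single_apply, hne'] at hj'
      have := hfg i hi j hj hgj.symm
      rw [this, hgj, ← this]
    · exact absurd h.1 one_ne_zero
  · intro h
    exact Finset.prod_congr rfl fun i hi => by rw [h i hi]

/-- Correctness of the divide-and-conquer scheme: the whole-rule zero test
succeeds iff the partial zero test succeeds on every part. -/
theorem divide_and_conquer_correct (n k : ℕ) (W : Set (Fin n)) (v p : Fin n → Bool)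
    (part : Fin n → Fin k) (ι : Type*) (σ : Fin n → Bool → ι)
    (hinj : ∀ i j b b', σ i b = σ j b' → i = j)
    (hW : ∀ i, σ i false = σ i true ↔ i ∈ W) :
    (∏ i : Fin n, (X (σ i (p i)) : MvPolynomial ι ℤ)) =
        ∏ i : Fin n, X (σ i (v i)) ↔
      ∀ j : Fin k,
        (∏ i ∈ Finset.univ.filter (fun i => part i = j),
            (X (σ i (p i)) : MvPolynomial ι ℤ)) =
          ∏ i ∈ Finset.univ.filter (fun i => part i = j), X (σ i (v i)) := by
  have key : ∀ s : Finset (Fin n),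
      (∏ i ∈ s, (X (σ i (p i)) : MvPolynomial ι ℤ)) = ∏ i ∈ s, X (σ i (v i)) ↔
        ∀ i ∈ s, σ i (p i) = σ i (v i) := fun s =>
    prod_X_eq_iff s _ _ fun i _ j _ h => hinj i j _ _ h
  rw [key]
  constructor
  · intro h j
    rw [key]
    intro i hi
    exact h i (Finset.mem_univ i)
  · intro h i _
    have := (key _).mp (h (part i)) i (by simp)
    exact this
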